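/- Let G = (V,E) be a graph with V = {v_1,…,v_n}, and let H be the graph with vertex set V_H = {v_i^1, v_i^2, w_i^1, w_i^2, z_i : i ∈ [n]} and edge set E_H = {w_i^1 v_j^1, w_i^2 v_j^2 : v_j ∈ N_G[v_i]} ∪ {v_i^1 v_j^1, v_i^2 v_j^2, z_i z_j : 1 ≤ i < j ≤ n} ∪ {v_i^1 z_j, v_i^2 z_j : i ∈ [n], j ∈ [n]}. If D* is a dominating set of G of cardinality k, then the set {v_i^1, v_i^2 : v_i ∈ D*} is a semipaired dominating set of H of cardinality 2k (with each v_i^1 semipaired with v_i^2). Consequently, γ_pr2(H) ≤ 2·γ(G). -/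

import Mathlib

/-- `D` is a dominating set of `G`. -/
def IsDomSet {V : Type*} (G : SimpleGraph V) (D : Finset V) : Prop :=
  ∀ v, v ∉ D → ∃ u ∈ D, G.Adj u v

/-- `D` is a semipaired dominating set of `G`: a dominating set that can be partitioned
into 2-element subsets (given by a fixed-point-free involution on `D`) such that the two
vertices in each pair are at distance at most 2 (adjacent or having a common neighbor). -/
def IsSemiPD {V : Type*} (G : SimpleGraph V) (D : Finset V) : Prop :=
  IsDomSet G D ∧ ∃ f : V → V, ∀ v ∈ D, f v ∈ D ∧ f v ≠ v ∧ f (f v) = v ∧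
    (G.Adj v (f v) ∨ ∃ w, G.Adj v w ∧ G.Adj (f v) w)

/-- The domination number `γ(G)`. -/
noncomputable def gamma {V : Type*} (G : SimpleGraph V) : ℕ :=
  sInf {k | ∃ D : Finset V, IsDomSet G D ∧ D.card = k}

/-- The semipaired domination number `γ_pr2(G)`. -/
noncomputable def gammaPr2 {V : Type*} (G : SimpleGraph V) : ℕ :=
  sInf {k | ∃ D : Finset V, IsSemiPD G D ∧ D.card = k}

/-- Vertices of the graph `H` constructed from a graph `G` with `n` vertices:
`V_H = {v_i^1, v_i^2, w_i^1, w_i^2, z_i : i ∈ [n]}`. -/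
inductive WV (n : ℕ) where
  | v1 : Fin n → WV n
  | v2 : Fin n → WV n
  | w1 : Fin n → WV n
  | w2 : Fin n → WV n
  | z : Fin n → WV n
deriving DecidableEq

/-- The defining relation of `H`:
`E_H = {w_i^1 v_j^1, w_i^2 v_j^2 : v_j ∈ N_G[v_i]} ∪
{v_i^1 v_j^1, v_i^2 v_j^2, z_i z_j : i < j} ∪ {v_i^1 z_j, v_i^2 z_j : i, j ∈ [n]}`. -/
def wRel {n : ℕ} (G : SimpleGraph (Fin n)) : WV n → WV n → Prop
  | .w1 i, .v1 j => i = j ∨ G.Adj i j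
  | .w2 i, .v2 j => i = j ∨ G.Adj i j
  | .v1 i, .v1 j => i ≠ j
  | .v2 i, .v2 j => i ≠ j
  | .z i, .z j => i ≠ j
  | .v1 _, .z _ => True
  | .v2 _, .z _ => True
  | _, _ => False

/-- The graph `H` constructed from `G`. -/
def bigW {n : ℕ} (G : SimpleGraph (Fin n)) : SimpleGraph (WV n) :=
  SimpleGraph.fromRel (wRel G)

def pairf {n : ℕ} : WV n → WV n
  | .v1 i => .v2 i
  | .v2 i => .v1 i
  | x => x

/-- Let `H` be the graph constructed from `G` in the approximation-hardness reduction.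
If `D*` is a dominating set of `G` of cardinality `k`, then
`{v_i^1, v_i^2 : v_i ∈ D*}` is a semipaired dominating set of `H` of cardinality `2k`,
with each `v_i^1` semipaired with `v_i^2`. Consequently `γ_pr2(H) ≤ 2·γ(G)`. -/
theorem semiPD_of_domSet_bigW {n : ℕ} (G : SimpleGraph (Fin n)) :
    (∀ (Dstar : Finset (Fin n)) (k : ℕ), IsDomSet G Dstar → Dstar.card = k →
      (IsDomSet (bigW G) (Dstar.image WV.v1 ∪ Dstar.image WV.v2) ∧
        ∃ f : WV n → WV n,
          (∀ v ∈ Dstar.image WV.v1 ∪ Dstar.image WV.v2,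
            f v ∈ Dstar.image WV.v1 ∪ Dstar.image WV.v2 ∧ f v ≠ v ∧ f (f v) = v ∧
            ((bigW G).Adj v (f v) ∨ ∃ w, (bigW G).Adj v w ∧ (bigW G).Adj (f v) w)) ∧
          ∀ i ∈ Dstar, f (WV.v1 i) = WV.v2 i) ∧
      (Dstar.image WV.v1 ∪ Dstar.image WV.v2).card = 2 * k) ∧
    gammaPr2 (bigW G) ≤ 2 * gamma G := by
  have hmain : ∀ (Dstar : Finset (Fin n)) (k : ℕ), IsDomSet G Dstar → Dstar.card = k →
      (IsDomSet (bigW G) (Dstar.image WV.v1 ∪ Dstar.image WV.v2) ∧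
        ∃ f : WV n → WV n,
          (∀ v ∈ Dstar.image WV.v1 ∪ Dstar.image WV.v2,
            f v ∈ Dstar.image WV.v1 ∪ Dstar.image WV.v2 ∧ f v ≠ v ∧ f (f v) = v ∧
            ((bigW G).Adj v (f v) ∨ ∃ w, (bigW G).Adj v w ∧ (bigW G).Adj (f v) w)) ∧
          ∀ i ∈ Dstar, f (WV.v1 i) = WV.v2 i) ∧
      (Dstar.image WV.v1 ∪ Dstar.image WV.v2).card = 2 * k := by
    intro D k hD hk
    have hmem : ∀ u ∈ D, WV.v1 u ∈ D.image WV.v1 ∪ D.image WV.v2 := by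
      intro u hu; exact Finset.mem_union_left _ (Finset.mem_image_of_mem _ hu)
    have hmem2 : ∀ u ∈ D, WV.v2 u ∈ D.image WV.v1 ∪ D.image WV.v2 := by
      intro u hu; exact Finset.mem_union_right _ (Finset.mem_image_of_mem _ hu)
    refine ⟨⟨?_, ?_⟩, ?_⟩
    · -- domination
      intro x hx
      match x with
      | .v1 j =>
        by_cases hj : j ∈ D
        · exact absurd (hmem j hj) hx
        · obtain ⟨u, hu, hadj⟩ := hD j hj
          refine ⟨.v1 u, hmem u hu, ?_⟩
          simp [bigW, wRel, G.ne_of_adj hadj]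
      | .v2 j =>
        by_cases hj : j ∈ D
        · exact absurd (hmem2 j hj) hx
        · obtain ⟨u, hu, hadj⟩ := hD j hj
          refine ⟨.v2 u, hmem2 u hu, ?_⟩
          simp [bigW, wRel, G.ne_of_adj hadj]
      | .w1 i =>
        by_cases hi : i ∈ D
        · exact ⟨.v1 i, hmem i hi, by simp [bigW, wRel]⟩
        · obtain ⟨u, hu, hadj⟩ := hD i hi
          exact ⟨.v1 u, hmem u hu, by simp [bigW, wRel, hadj.symm]⟩
      | .w2 i =>
        by_cases hi : i ∈ D
        · exact ⟨.v2 i, hmem2 i hi, by simp [bigW, wRel]⟩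
        · obtain ⟨u, hu, hadj⟩ := hD i hi
          exact ⟨.v2 u, hmem2 u hu, by simp [bigW, wRel, hadj.symm]⟩
      | .z i =>
        have : ∃ u, u ∈ D := by
          by_cases hi : i ∈ D
          · exact ⟨i, hi⟩
          · obtain ⟨u, hu, _⟩ := hD i hi; exact ⟨u, hu⟩
        obtain ⟨u, hu⟩ := this
        exact ⟨.v1 u, hmem u hu, by simp [bigW, wRel]⟩
    · -- pairing
      refine ⟨pairf, ?_, fun i _ => rfl⟩
      intro v hv
      simp only [Finset.mem_union, Finset.mem_image] at hv
      rcases hv with ⟨i, hi, rfl⟩ | ⟨i, hi, rfl⟩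
      · exact ⟨hmem2 i hi, by simp [pairf], rfl,
          Or.inr ⟨.z i, by simp [bigW, wRel], by simp [bigW, pairf, wRel]⟩⟩
      · exact ⟨hmem i hi, by simp [pairf], rfl,
          Or.inr ⟨.z i, by simp [bigW, wRel], by simp [bigW, pairf, wRel]⟩⟩
    · -- cardinality
      have hdisj : Disjoint (D.image WV.v1) (D.image WV.v2) := by
        rw [Finset.disjoint_left]
        intro a ha hb
        simp only [Finset.mem_image] at ha hb
        obtain ⟨i, _, rfl⟩ := ha
        obtain ⟨j, _, h⟩ := hb
        cases h
      rw [Finset.card_union_of_disjoint hdisj,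
        Finset.card_image_of_injective _ (fun a b h => by injection h),
        Finset.card_image_of_injective _ (fun a b h => by injection h), hk]
      ring
  refine ⟨hmain, ?_⟩
  have hne : gamma G ∈ {k | ∃ D : Finset (Fin n), IsDomSet G D ∧ D.card = k} := by
    apply Nat.sInf_mem
    exact ⟨Finset.univ.card, Finset.univ, fun v hv => absurd (Finset.mem_univ v) hv, rfl⟩
  obtain ⟨D, hD, hcard⟩ := hne
  obtain ⟨⟨hdom, f, hf, _⟩, hc⟩ := hmain D (gamma G) hD hcard
  exact Nat.sInf_le ⟨D.image WV.v1 ∪ D.image WV.v2, ⟨hdom, f, hf⟩, hc⟩
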